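/- Let ζ ∈ ℂ be a primitive 7th root of unity and let P be a homogeneous polynomial of degree 7 in variables X_i indexed by i ∈ ℤ/7ℤ. Assume P is invariant under the three substitutions X_i ↦ X_{i+1}, X_i ↦ ζ^i·X_i, and X_i ↦ −X_{−i} (equivalently, P(z) = P(z') whenever z'(i) = z(i+1), whenever z'(i) = ζ^i z(i), and whenever z'(i) = −z(−i)). Then for every a, b ∈ ℤ/7ℤ and every y : ℤ/7ℤ → ℂ satisfying y(−i) = y(i) for all i, the polynomial P vanishes at the point z defined by z(i) = ζ^{b·i}·y(i+a). -/

import Mathlib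

open MvPolynomial

private lemma pow_mod7 {ζ : ℂ} (h7 : ζ ^ 7 = 1) (m : ℕ) : ζ ^ m = ζ ^ (m % 7) := by
  conv_lhs => rw [← Nat.div_add_mod m 7]
  rw [pow_add, pow_mul, h7, one_pow, one_mul]

private lemma eval_mul_homog {n : ℕ} (P : MvPolynomial (ZMod 7) ℂ) (hP : P.IsHomogeneous n)
    (c : ℂ) (z : ZMod 7 → ℂ) :
    eval (fun i => c * z i) P = c ^ n * eval z P := by
  rw [eval_eq, eval_eq, Finset.mul_sum]
  refine Finset.sum_congr rfl fun d hd => ?_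
  have hdeg : d.degree = n := by
    by_contra hne
    exact (mem_support_iff.mp hd) (hP.coeff_eq_zero hne)
  have : ∏ i ∈ d.support, (c * z i) ^ d i
      = c ^ n * ∏ i ∈ d.support, z i ^ d i := by
    rw [← hdeg, Finsupp.degree_apply, ← Finset.prod_pow_eq_pow_sum, ← Finset.prod_mul_distrib]
    exact Finset.prod_congr rfl fun i _ => (mul_pow _ _ _)
  rw [this]; ring

/-- A degree-7 homogeneous polynomial in variables indexed by `ZMod 7`,
invariant under the Heisenberg substitutions `Xᵢ ↦ Xᵢ₊₁`, `Xᵢ ↦ ζ^i Xᵢ` and the involution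
`Xᵢ ↦ -X₋ᵢ`, vanishes on each of the forty-nine `P³₋`'s. -/
theorem g7_invariant_septimic_vanishes_on_P3minus
    (ζ : ℂ) (hζ : IsPrimitiveRoot ζ 7)
    (P : MvPolynomial (ZMod 7) ℂ) (hP : P.IsHomogeneous 7)
    (hshift : ∀ z : ZMod 7 → ℂ, eval (fun i => z (i + 1)) P = eval z P)
    (hscale : ∀ z : ZMod 7 → ℂ, eval (fun i => ζ ^ i.val * z i) P = eval z P)
    (hinv : ∀ z : ZMod 7 → ℂ, eval (fun i => -z (-i)) P = eval z P) :
    ∀ (a b : ZMod 7) (y : ZMod 7 → ℂ), (∀ i, y (-i) = y i) →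
      eval (fun i => ζ ^ (b * i).val * y (i + a)) P = 0 := by
  have h7 : ζ ^ 7 = 1 := hζ.pow_eq_one
  -- iterated shift
  have shiftn : ∀ (n : ℕ) (z : ZMod 7 → ℂ),
      eval (fun i => z (i + (n : ZMod 7))) P = eval z P := by
    intro n
    induction n with
    | zero => intro z; simp
    | succ k ih =>
        intro z
        have h1 := hshift (fun i => z (i + (k : ZMod 7)))
        have heq : (fun i : ZMod 7 => z (i + ((k + 1 : ℕ) : ZMod 7)))
            = fun i : ZMod 7 => z (i + 1 + (k : ZMod 7)) := by
          funext i; push_cast; ring_nf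
        rw [heq, h1, ih]
  -- iterated scale
  have scalen : ∀ (n : ℕ) (z : ZMod 7 → ℂ),
      eval (fun i => ζ ^ (n * i.val) * z i) P = eval z P := by
    intro n
    induction n with
    | zero => intro z; simp
    | succ k ih =>
        intro z
        have h1 := hscale (fun i => ζ ^ (k * i.val) * z i)
        have heq : (fun i : ZMod 7 => ζ ^ ((k + 1) * i.val) * z i)
            = fun i : ZMod 7 => ζ ^ i.val * (ζ ^ (k * i.val) * z i) := by
          funext i; rw [← mul_assoc, ← pow_add]; ring_nf
        rw [heq, h1, ih]
  -- symmetric base case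
  have base : ∀ w : ZMod 7 → ℂ, (∀ i, w (-i) = w i) → eval w P = 0 := by
    intro w hw
    have h1 := hinv w
    have heq : (fun i : ZMod 7 => -w (-i)) = fun i : ZMod 7 => (-1 : ℂ) * w i := by
      funext i; rw [hw i]; ring
    rw [heq, eval_mul_homog P hP (-1) w] at h1
    norm_num at h1
    linear_combination (-1/2 : ℂ) * h1
  intro a b y hy
  have key : (fun i : ZMod 7 => ζ ^ (b * i).val * y (i + a))
      = fun i : ZMod 7 => ζ ^ (b.val * i.val) * y (i + (a.val : ZMod 7)) := by
    funext i
    rw [ZMod.natCast_val, ZMod.cast_id]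
    congr 1
    rw [pow_mod7 h7 (b.val * i.val), ZMod.val_mul]
  rw [key, scalen b.val (fun i => y (i + (a.val : ZMod 7))), shiftn a.val y]
  exact base y hy
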